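/- Let (G, B) be a metric n-Lie algebra without strong semisimple ideals and with Levi decomposition G = S ⊕ R. A subalgebra H of G is a minimal ideal of G if and only if H is an irreducible S-submodule of the centralizer C_G(R). -/

import Mathlib

open scoped BigOperators

section NLiePreamble

variable {n : ℕ} {G : Type*} [AddCommGroup G] [Module ℂ G]

/-- The inner derivation `ad_y z = [y₁, …, y_{n+1}, z]` determined by an
`(n+2)`-ary alternating bracket. -/
def nAd (br : AlternatingMap ℂ G G (Fin (n + 2))) (y : Fin (n + 1) → G) (z : G) : G :=
  br (Fin.snoc y z)

/-- The generalized Jacobi identity: the bracket makes `G` an `(n+2)`-Lie algebra. -/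
def IsNLie (br : AlternatingMap ℂ G G (Fin (n + 2))) : Prop :=
  ∀ (x : Fin (n + 2) → G) (y : Fin (n + 1) → G),
    nAd br y (br x) = ∑ i, br (Function.update x i (nAd br y (x i)))

/-- A submodule `I` is an ideal: `[I, G, …, G] ⊆ I`. -/
def IsIdeal (br : AlternatingMap ℂ G G (Fin (n + 2))) (I : Submodule ℂ G) : Prop :=
  ∀ (y : Fin (n + 1) → G), ∀ x ∈ I, br (Fin.snoc y x) ∈ I

/-- Invariance of a bilinear form under the bracket. -/
def IsInvariantForm (br : AlternatingMap ℂ G G (Fin (n + 2)))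
    (K : LinearMap.BilinForm ℂ G) : Prop :=
  ∀ (x : Fin (n + 1) → G) (y₁ y₂ : G),
    K (br (Fin.snoc x y₁)) y₂ = - K (br (Fin.snoc x y₂)) y₁

/-- A metric on an `n`-Lie algebra: a nondegenerate invariant symmetric bilinear form. -/
def IsMetric (br : AlternatingMap ℂ G G (Fin (n + 2)))
    (B : LinearMap.BilinForm ℂ G) : Prop :=
  B.Nondegenerate ∧ (∀ x y : G, B x y = B y x) ∧ IsInvariantForm br B

/-- The span `[W₁, …, W_{n+2}]` of all brackets with entries in the given subspaces. -/
def bracketSpan (br : AlternatingMap ℂ G G (Fin (n + 2)))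
    (W : Fin (n + 2) → Submodule ℂ G) : Submodule ℂ G :=
  Submodule.span ℂ {z | ∃ w : Fin (n + 2) → G, (∀ i, w i ∈ W i) ∧ z = br w}

/-- The derived algebra `[G, …, G]`. -/
def derivedAlg (br : AlternatingMap ℂ G G (Fin (n + 2))) : Submodule ℂ G :=
  bracketSpan br fun _ => ⊤

/-- `[I, …, I]` for a subspace `I`. -/
def derivedStep (br : AlternatingMap ℂ G G (Fin (n + 2))) (I : Submodule ℂ G) :
    Submodule ℂ G :=
  bracketSpan br fun _ => I

/-- `[J, H, G, …, G]` for subspaces `J, H`. -/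
def pairBracket (br : AlternatingMap ℂ G G (Fin (n + 2))) (J H : Submodule ℂ G) :
    Submodule ℂ G :=
  bracketSpan br (Fin.cons J (Fin.cons H fun _ => (⊤ : Submodule ℂ G)))

/-- `[I, G, …, G]` for a subspace `I`. -/
def idealBracket (br : AlternatingMap ℂ G G (Fin (n + 2))) (I : Submodule ℂ G) :
    Submodule ℂ G :=
  bracketSpan br (Fin.cons I fun _ => (⊤ : Submodule ℂ G))

/-- The centralizer `C_G(I) = {x : [x, I, G, …, G] = 0}` of a subspace `I`. -/
def centralizer (br : AlternatingMap ℂ G G (Fin (n + 2))) (I : Submodule ℂ G) :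
    Submodule ℂ G where
  carrier := {x | ∀ v ∈ I, ∀ y : Fin n → G, br (Fin.cons x (Fin.cons v y)) = 0}
  add_mem' := by
    intro a b ha hb v hv y
    have := br.toMultilinearMap.cons_add (Fin.cons v y) a b
    simp only [AlternatingMap.coe_multilinearMap] at this
    rw [this, ha v hv y, hb v hv y, add_zero]
  zero_mem' := by
    intro v hv y
    have := br.toMultilinearMap.cons_smul (Fin.cons v y) (0 : ℂ) 0
    simpa using (br.toMultilinearMap.map_coord_zero (m := Fin.cons 0 (Fin.cons v y)) 0 rfl)
  smul_mem' := by
    intro c a ha v hv y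
    have := br.toMultilinearMap.cons_smul (Fin.cons v y) c a
    simp only [AlternatingMap.coe_multilinearMap] at this
    rw [this, ha v hv y, smul_zero]

/-- The center `C(G)`. -/
def center (br : AlternatingMap ℂ G G (Fin (n + 2))) : Submodule ℂ G :=
  centralizer br ⊤

/-- Nondegeneracy of `B` restricted to a subspace `W`. -/
def NondegOn (B : LinearMap.BilinForm ℂ G) (W : Submodule ℂ G) : Prop :=
  ∀ x ∈ W, (∀ y ∈ W, B x y = 0) → x = 0

/-- `(G, B)` is `B`-irreducible: no nontrivial nondegenerate ideals. -/
def BIrreducible (br : AlternatingMap ℂ G G (Fin (n + 2)))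
    (B : LinearMap.BilinForm ℂ G) : Prop :=
  ∀ I : Submodule ℂ G, IsIdeal br I → NondegOn B I → I = ⊥ ∨ I = ⊤

/-- `W` is a subalgebra. -/
def IsSubalgebra (br : AlternatingMap ℂ G G (Fin (n + 2))) (W : Submodule ℂ G) : Prop :=
  ∀ x : Fin (n + 2) → G, (∀ i, x i ∈ W) → br x ∈ W

/-- `I` is an ideal of the subalgebra `W`. -/
def IsIdealOf (br : AlternatingMap ℂ G G (Fin (n + 2))) (W I : Submodule ℂ G) : Prop :=
  I ≤ W ∧ ∀ (y : Fin (n + 1) → G), (∀ i, y i ∈ W) → ∀ x ∈ I, br (Fin.snoc y x) ∈ I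

/-- The subalgebra `W` is a simple `n`-Lie algebra. -/
def IsSimpleAlg (br : AlternatingMap ℂ G G (Fin (n + 2))) (W : Submodule ℂ G) : Prop :=
  derivedStep br W ≠ ⊥ ∧ ∀ I : Submodule ℂ G, IsIdealOf br W I → I = ⊥ ∨ I = W

/-- The subalgebra `W` is strong semisimple: a direct sum of simple ideals. -/
def IsStrongSemisimple (br : AlternatingMap ℂ G G (Fin (n + 2)))
    (W : Submodule ℂ G) : Prop :=
  ∃ (m : ℕ) (S : Fin m → Submodule ℂ G),
    (∀ i, IsIdealOf br W (S i) ∧ IsSimpleAlg br (S i)) ∧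
    iSupIndep S ∧ (⨆ i, S i) = W

/-- `I` is solvable (via the derived series). -/
def NLieSolvable (br : AlternatingMap ℂ G G (Fin (n + 2))) (I : Submodule ℂ G) : Prop :=
  ∃ k : ℕ, (derivedStep br)^[k] I = ⊥

/-- `R` is the radical: the maximal solvable ideal. -/
def NLieRadical (br : AlternatingMap ℂ G G (Fin (n + 2))) (R : Submodule ℂ G) : Prop :=
  IsIdeal br R ∧ NLieSolvable br R ∧
    ∀ I : Submodule ℂ G, IsIdeal br I → NLieSolvable br I → I ≤ R

/-- A Levi decomposition `G = S ⊕ R`. -/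
def IsLeviDecomp (br : AlternatingMap ℂ G G (Fin (n + 2)))
    (S R : Submodule ℂ G) : Prop :=
  NLieRadical br R ∧ IsSubalgebra br S ∧ IsStrongSemisimple br S ∧ IsCompl S R

/-- A minimal ideal of `G`. -/
def IsMinimalIdeal (br : AlternatingMap ℂ G G (Fin (n + 2))) (J : Submodule ℂ G) : Prop :=
  IsIdeal br J ∧ J ≠ ⊥ ∧
    ∀ I : Submodule ℂ G, IsIdeal br I → I ≤ J → I = ⊥ ∨ I = J

/-- The socle: the sum of all minimal ideals. -/
def socle (br : AlternatingMap ℂ G G (Fin (n + 2))) : Submodule ℂ G :=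
  sSup {J | IsMinimalIdeal br J}

/-- `H` is an `S`-submodule: `[S, …, S, H] ⊆ H`. -/
def IsSModule (br : AlternatingMap ℂ G G (Fin (n + 2))) (S H : Submodule ℂ G) : Prop :=
  ∀ (y : Fin (n + 1) → G), (∀ i, y i ∈ S) → ∀ x ∈ H, br (Fin.snoc y x) ∈ H

/-- `H` is an irreducible `S`-submodule. -/
def IsIrreducibleSModule (br : AlternatingMap ℂ G G (Fin (n + 2)))
    (S H : Submodule ℂ G) : Prop :=
  IsSModule br S H ∧ H ≠ ⊥ ∧
    ∀ K : Submodule ℂ G, K ≤ H → IsSModule br S K → K = ⊥ ∨ K = H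

/-- The space of invariant symmetric bilinear forms on `G`. -/
def invSymForms (br : AlternatingMap ℂ G G (Fin (n + 2))) :
    Submodule ℂ (LinearMap.BilinForm ℂ G) where
  carrier := {K | (∀ x y : G, K x y = K y x) ∧ IsInvariantForm br K}
  add_mem' := by
    rintro K L ⟨hK1, hK2⟩ ⟨hL1, hL2⟩
    refine ⟨fun x y => by simp [hK1 x y, hL1 x y], fun x y₁ y₂ => ?_⟩
    simp only [LinearMap.add_apply]
    rw [hK2 x y₁ y₂, hL2 x y₁ y₂]; ring
  zero_mem' := ⟨fun x y => by simp, fun x y₁ y₂ => by simp⟩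
  smul_mem' := by
    rintro c K ⟨hK1, hK2⟩
    refine ⟨fun x y => by simp [hK1 x y], fun x y₁ y₂ => ?_⟩
    simp only [LinearMap.smul_apply, smul_eq_mul]
    rw [hK2 x y₁ y₂]; ring

/-- The span of all nondegenerate invariant symmetric bilinear forms (the metric space `B(G)`). -/
def metricSpan (br : AlternatingMap ℂ G G (Fin (n + 2))) :
    Submodule ℂ (LinearMap.BilinForm ℂ G) :=
  Submodule.span ℂ {K : LinearMap.BilinForm ℂ G | IsMetric br K}

/-- `Γ_B(G)`: `B`-self-adjoint elements of the centroid. -/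
def centroidB (br : AlternatingMap ℂ G G (Fin (n + 2)))
    (B : LinearMap.BilinForm ℂ G) : Submodule ℂ (G →ₗ[ℂ] G) where
  carrier := {φ | (∀ (x : Fin (n + 1) → G) (z : G),
      φ (br (Fin.snoc x z)) = br (Fin.snoc x (φ z))) ∧
    ∀ x y : G, B (φ x) y = B x (φ y)}
  add_mem' := by
    rintro φ ψ ⟨hφ1, hφ2⟩ ⟨hψ1, hψ2⟩
    constructor
    · intro x z
      have hadd := br.toMultilinearMap.snoc_add x (φ z) (ψ z)
      simp only [AlternatingMap.coe_multilinearMap] at hadd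
      simp [hφ1 x z, hψ1 x z, hadd]
    · intro x y; simp [hφ2 x y, hψ2 x y]
  zero_mem' := by
    constructor
    · intro x z
      have h0 := br.toMultilinearMap.map_coord_zero (m := Fin.snoc x (0 : G)) (Fin.last _)
        (by simp)
      simp only [AlternatingMap.coe_multilinearMap] at h0
      simp [h0]
    · intro x y; simp
  smul_mem' := by
    rintro c φ ⟨hφ1, hφ2⟩
    constructor
    · intro x z
      have hs := br.toMultilinearMap.snoc_smul x c (φ z)
      simp only [AlternatingMap.coe_multilinearMap] at hs
      simp [hφ1 x z, hs]
    · intro x y; simp [hφ2 x y]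

end NLiePreamble

section AuxNLie

variable {n : ℕ} {G : Type*} [AddCommGroup G] [Module ℂ G]

namespace NLieAux

lemma fin_zero_ne_one : (0 : Fin (n + 2)) ≠ 1 :=
  Fin.ne_of_val_ne (by simp)

lemma cons_one {α : Sort*} (a : α) (p : Fin (n + 1) → α) :
    (Fin.cons a p : Fin (n + 2) → α) 1 = p 0 := by
  rw [← Fin.succ_zero_eq_one, Fin.cons_succ]

variable (br : AlternatingMap ℂ G G (Fin (n + 2)))

lemma mem_centralizer_iff {I : Submodule ℂ G} {x : G} :
    x ∈ centralizer br I ↔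
      ∀ v ∈ I, ∀ y : Fin n → G, br (Fin.cons x (Fin.cons v y)) = 0 :=
  Iff.rfl

lemma snoc_eq_sign_smul_cons (p : Fin (n + 1) → G) (a : G) :
    br (Fin.snoc p a) = Equiv.Perm.sign (finRotate (n + 2)) • br (Fin.cons a p) := by
  rw [Fin.snoc_eq_cons_rotate]
  exact br.map_perm (Fin.cons a p) (finRotate (n + 2))

private lemma units_smul_symm {u : ℤˣ} {x y : G} (h : y = u • x) : x = u • y := by
  rcases Int.units_eq_one_or u with rfl | rfl <;>
    simp_all [Units.smul_def]

lemma exists_sign_cons_snoc :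
    ∃ s : ℤˣ, ∀ (p : Fin (n + 1) → G) (a : G),
      br (Fin.cons a p) = s • br (Fin.snoc p a) :=
  ⟨Equiv.Perm.sign (finRotate (n + 2)), fun p a =>
    units_smul_symm (snoc_eq_sign_smul_cons br p a)⟩

lemma cons_mem_of_isIdeal {I : Submodule ℂ G} (hI : IsIdeal br I)
    (p : Fin (n + 1) → G) {a : G} (ha : a ∈ I) : br (Fin.cons a p) ∈ I := by
  obtain ⟨s, hs⟩ := exists_sign_cons_snoc br
  rw [hs p a]
  rcases Int.units_eq_one_or s with rfl | rfl
  · simpa using hI p a ha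
  · simpa [Units.smul_def] using Submodule.neg_mem _ (hI p a ha)

lemma reorder2 (m : Fin (n + 2) → G) {i₀ i₁ : Fin (n + 2)} (h : i₀ ≠ i₁) :
    ∃ (c : ℂ) (q : Fin n → G),
      br m = c • br (Fin.cons (m i₀) (Fin.cons (m i₁) q)) := by
  classical
  set τ := Equiv.swap (0 : Fin (n + 2)) i₀ with hτ
  have hne : τ i₁ ≠ 0 := by
    intro hc
    apply h
    have h2 : τ (τ i₁) = τ 0 := by rw [hc]
    rw [Equiv.swap_apply_self, Equiv.swap_apply_left] at h2
    exact h2.symm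
  set σ : Equiv.Perm (Fin (n + 2)) := (Equiv.swap (1 : Fin (n + 2)) (τ i₁)).trans τ with hσ
  have hσ0 : σ 0 = i₀ := by
    have h0 : (Equiv.swap (1 : Fin (n + 2)) (τ i₁)) 0 = 0 :=
      Equiv.swap_apply_of_ne_of_ne fin_zero_ne_one (Ne.symm hne)
    show τ ((Equiv.swap (1 : Fin (n + 2)) (τ i₁)) 0) = i₀
    rw [h0, hτ, Equiv.swap_apply_left]
  have hσ1 : σ 1 = i₁ := by
    show τ ((Equiv.swap (1 : Fin (n + 2)) (τ i₁)) 1) = i₁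
    rw [Equiv.swap_apply_left, Equiv.swap_apply_self]
  have hmc : m ∘ σ = Fin.cons (m i₀) (Fin.cons (m i₁) fun k => m (σ k.succ.succ)) := by
    funext j
    refine Fin.cases ?_ (fun j' => ?_) j
    · show m (σ 0) = _
      rw [hσ0, Fin.cons_zero]
    · refine Fin.cases ?_ (fun k => ?_) j'
      · show m (σ (0 : Fin (n + 1)).succ) = _
        rw [Fin.succ_zero_eq_one, hσ1, cons_one, Fin.cons_zero]
      · show m (σ k.succ.succ) = _
        rw [Fin.cons_succ, Fin.cons_succ]
  have hperm := br.map_perm m σ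
  rw [hmc] at hperm
  rcases Int.units_eq_one_or (Equiv.Perm.sign σ) with hs | hs <;> rw [hs] at hperm
  · exact ⟨1, fun k => m (σ k.succ.succ), by rw [one_smul, hperm, one_smul]⟩
  · refine ⟨-1, fun k => m (σ k.succ.succ), ?_⟩
    have h3 : br (Fin.cons (m i₀) (Fin.cons (m i₁) fun k => m (σ k.succ.succ))) = -br m := by
      simpa [Units.smul_def] using hperm
    rw [h3]
    simp

lemma reorder1 (m : Fin (n + 2) → G) (i₀ : Fin (n + 2)) :
    ∃ (c : ℂ) (q : Fin (n + 1) → G), br m = c • br (Fin.cons (m i₀) q) := by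
  rcases eq_or_ne i₀ 0 with rfl | hne
  · obtain ⟨c, q, hq⟩ := reorder2 br m fin_zero_ne_one
    exact ⟨c, _, hq⟩
  · obtain ⟨c, q, hq⟩ := reorder2 br m hne
    exact ⟨c, _, hq⟩

lemma ideal_slot {I : Submodule ℂ G} (hI : IsIdeal br I) (m : Fin (n + 2) → G)
    (i₀ : Fin (n + 2)) (hm : m i₀ ∈ I) : br m ∈ I := by
  obtain ⟨c, q, hq⟩ := reorder1 br m i₀
  rw [hq]
  exact Submodule.smul_mem _ _ (cons_mem_of_isIdeal br hI q hm)

lemma mem_bracketSpan {W : Fin (n + 2) → Submodule ℂ G} {w : Fin (n + 2) → G}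
    (hw : ∀ i, w i ∈ W i) : br w ∈ bracketSpan br W :=
  Submodule.subset_span ⟨w, hw, rfl⟩

lemma isIdeal_top : IsIdeal br (⊤ : Submodule ℂ G) :=
  fun _ _ _ => Submodule.mem_top

lemma bracketSpan_isIdeal (hLie : IsNLie br) {W : Fin (n + 2) → Submodule ℂ G}
    (hW : ∀ i, IsIdeal br (W i)) : IsIdeal br (bracketSpan br W) := by
  intro y x hx
  induction hx using Submodule.span_induction with
  | mem z hz =>
      obtain ⟨w, hw, rfl⟩ := hz
      have hj : br (Fin.snoc y (br w)) =
          ∑ i, br (Function.update w i (nAd br y (w i))) := hLie w y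
      rw [hj]
      refine Submodule.sum_mem _ fun i _ => mem_bracketSpan br ?_
      intro j
      rcases eq_or_ne j i with rfl | hne
      · rw [Function.update_self]
        exact hW j y (w j) (hw j)
      · rw [Function.update_of_ne hne]
        exact hw j
  | zero =>
      have h0 : br.toMultilinearMap (Fin.snoc y (0 : G)) = 0 :=
        br.toMultilinearMap.map_coord_zero (Fin.last _) (by simp)
      simp only [AlternatingMap.coe_multilinearMap] at h0
      rw [h0]
      exact Submodule.zero_mem _
  | add u v hu hv ihu ihv =>
      have hadd := br.toMultilinearMap.snoc_add y u v
      simp only [AlternatingMap.coe_multilinearMap] at hadd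
      rw [hadd]
      exact Submodule.add_mem _ ihu ihv
  | smul c u hu ihu =>
      have hsm := br.toMultilinearMap.snoc_smul y c u
      simp only [AlternatingMap.coe_multilinearMap] at hsm
      rw [hsm]
      exact Submodule.smul_mem _ _ ihu

lemma isIdeal_sup {I J : Submodule ℂ G} (hI : IsIdeal br I) (hJ : IsIdeal br J) :
    IsIdeal br (I ⊔ J) := by
  intro y x hx
  obtain ⟨a, ha, b, hb, rfl⟩ := Submodule.mem_sup.mp hx
  have hadd := br.toMultilinearMap.snoc_add y a b
  simp only [AlternatingMap.coe_multilinearMap] at hadd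
  rw [hadd]
  exact Submodule.add_mem _ (Submodule.mem_sup_left (hI y a ha))
    (Submodule.mem_sup_right (hJ y b hb))

lemma B_cons_swap {B : LinearMap.BilinForm ℂ G} (hsymm : ∀ x y : G, B x y = B y x)
    (hinv : IsInvariantForm br B) (a x : G) (p : Fin (n + 1) → G) :
    B (br (Fin.cons a p)) x = - B (br (Fin.cons x p)) a := by
  obtain ⟨s, hs⟩ := exists_sign_cons_snoc br
  rcases Int.units_eq_one_or s with rfl | rfl
  · rw [hs p a, hs p x, one_smul, one_smul]
    exact hinv p a x
  · rw [hs p a, hs p x]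
    simp only [Units.smul_def, Units.val_neg, Units.val_one, neg_smul, one_smul, map_neg,
      LinearMap.neg_apply]
    rw [hinv p a x]

lemma perp_isIdeal (B : LinearMap.BilinForm ℂ G) (hsymm : ∀ x y : G, B x y = B y x)
    (hinv : IsInvariantForm br B) {I : Submodule ℂ G} (hI : IsIdeal br I) :
    IsIdeal br (B.orthogonal I) := by
  intro y x hx
  rw [LinearMap.BilinForm.mem_orthogonal_iff]
  intro v hv
  rw [hsymm v (br (Fin.snoc y x)), hinv y x v]
  have hmem : br (Fin.snoc y v) ∈ I := hI y v hv
  have h0 := LinearMap.BilinForm.mem_orthogonal_iff.mp hx _ hmem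
  rw [h0, neg_zero]

lemma smodule_isIdeal (S R K : Submodule ℂ G) (hsup : S ⊔ R = ⊤)
    (hC : K ≤ centralizer br R) (hmod : IsSModule br S K) : IsIdeal br K := by
  classical
  intro y x hx
  have hy : ∀ i, ∃ a ∈ S, ∃ b ∈ R, a + b = y i := fun i =>
    Submodule.mem_sup.mp (by rw [hsup]; exact Submodule.mem_top)
  choose a ha b hb hab using hy
  set u : Fin (n + 2) → G := Fin.snoc a x with hu
  set v : Fin (n + 2) → G := Fin.snoc b (0 : G) with hv
  have hsplit : Fin.snoc y x = u + v := by
    funext j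
    refine Fin.lastCases ?_ (fun j' => ?_) j
    · simp [hu, hv]
    · simp only [hu, hv, Pi.add_apply, Fin.snoc_castSucc]
      exact (hab j').symm
  rw [hsplit]
  have hexp := br.toMultilinearMap.map_add_univ u v
  simp only [AlternatingMap.coe_multilinearMap] at hexp
  rw [hexp]
  refine Submodule.sum_mem _ fun s _ => ?_
  by_cases hlast : Fin.last (n + 1) ∈ s
  · by_cases hs : s = Finset.univ
    · subst hs
      rw [Finset.piecewise_univ, hu]
      exact hmod a ha x hx
    · obtain ⟨j, hj⟩ : ∃ j, j ∉ s := by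
        by_contra hc
        push_neg at hc
        exact hs (Finset.eq_univ_iff_forall.mpr hc)
      have hjne : j ≠ Fin.last (n + 1) := fun hc => hj (hc ▸ hlast)
      obtain ⟨j', rfl⟩ := Fin.exists_castSucc_eq.mpr hjne
      have hm0 : s.piecewise u v (Fin.last (n + 1)) = x := by
        rw [Finset.piecewise_eq_of_mem _ _ _ hlast, hu, Fin.snoc_last]
      have hm1 : s.piecewise u v (Fin.castSucc j') = b j' := by
        rw [Finset.piecewise_eq_of_notMem _ _ _ hj, hv, Fin.snoc_castSucc]
      obtain ⟨c, q, hq⟩ := reorder2 br (s.piecewise u v) (Ne.symm hjne)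
      rw [hq, hm0, hm1]
      have hz := (mem_centralizer_iff br).mp (hC hx) (b j') (hb j') q
      rw [hz, smul_zero]
      exact Submodule.zero_mem _
  · have h0 : s.piecewise u v (Fin.last (n + 1)) = 0 := by
      rw [Finset.piecewise_eq_of_notMem _ _ _ hlast, hv, Fin.snoc_last]
    have hz := br.toMultilinearMap.map_coord_zero (m := s.piecewise u v) (Fin.last (n + 1)) h0
    simp only [AlternatingMap.coe_multilinearMap] at hz
    rw [hz]
    exact Submodule.zero_mem _

lemma main_contra [FiniteDimensional ℂ G] (hLie : IsNLie br)
    (B : LinearMap.BilinForm ℂ G) (hB : IsMetric br B)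
    (R : Submodule ℂ G) (hRid : IsIdeal br R) (hsolv : NLieSolvable br R)
    {H : Submodule ℂ G} (hmin : IsMinimalIdeal br H)
    (hPH : pairBracket br H R = H) : False := by
  obtain ⟨hHid, hHne, hHmin⟩ := hmin
  obtain ⟨hnd, hsymm, hinv⟩ := hB
  set O := B.orthogonal H with hO
  have hrefl : B.IsRefl := fun x y hxy => by rw [hsymm y x]; exact hxy
  have hOid : IsIdeal br O := perp_isIdeal br B hsymm hinv hHid
  have hWid : ∀ i, IsIdeal br ((Fin.cons R fun _ => (⊤ : Submodule ℂ G) : Fin (n + 2) → Submodule ℂ G) i) := by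
    intro i
    refine Fin.cases ?_ (fun j => ?_) i
    · rw [Fin.cons_zero]; exact hRid
    · rw [Fin.cons_succ]; exact isIdeal_top br
  have hTid : IsIdeal br (idealBracket br R) := bracketSpan_isIdeal br hLie hWid
  set T := idealBracket br R with hT
  have hOne : O ≠ ⊤ := by
    intro hOt
    apply hHne
    rw [Submodule.eq_bot_iff]
    intro h hh
    apply hnd.1 h
    intro yy
    have hyy : yy ∈ O := by rw [hOt]; exact Submodule.mem_top
    have h0 := LinearMap.BilinForm.mem_orthogonal_iff.mp hyy h hh
    exact h0
  have dich : ∀ J : Submodule ℂ G, IsIdeal br J → O ≤ J → J = O ∨ J = ⊤ := by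
    intro J hJ hOJ
    have h1 : B.orthogonal J ≤ H := by
      have h2 := LinearMap.BilinForm.orthogonal_le (B := B) hOJ
      rw [hO] at h2
      rwa [LinearMap.BilinForm.orthogonal_orthogonal hnd hrefl] at h2
    rcases hHmin _ (perp_isIdeal br B hsymm hinv hJ) h1 with hbot | hHeq
    · right
      have h3 := LinearMap.BilinForm.orthogonal_orthogonal hnd hrefl J
      rw [← h3, hbot, eq_top_iff]
      intro x _
      rw [LinearMap.BilinForm.mem_orthogonal_iff]
      intro u hu
      rw [Submodule.mem_bot] at hu
      simp [LinearMap.BilinForm.isOrtho_def, hu]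
    · left
      have h4 := LinearMap.BilinForm.le_orthogonal_orthogonal (B := B) (N := J) hrefl
      rw [hHeq] at h4
      exact le_antisymm h4 hOJ
  have hHT : ¬ (T ≤ O) := by
    intro hTO
    apply hHne
    rw [Submodule.eq_bot_iff]
    intro h hh
    have hh' : h ∈ pairBracket br H R := by rw [hPH]; exact hh
    have key : ∀ z, z ∈ pairBracket br H R → ∀ x, B z x = 0 := by
      intro z hz
      induction hz using Submodule.span_induction with
      | mem w hw =>
          obtain ⟨w, hwmem, rfl⟩ := hw
          intro x
          have hw0 : w 0 ∈ H := by
            have := hwmem 0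
            rwa [Fin.cons_zero] at this
          have hw1 : w 1 ∈ R := by
            have := hwmem 1
            rwa [cons_one, Fin.cons_zero] at this
          have hwc : br w = br (Fin.cons (w 0) (Fin.tail w)) := by
            rw [Fin.cons_self_tail]
          rw [hwc, B_cons_swap br hsymm hinv (w 0) x (Fin.tail w)]
          have hv1 : (Fin.cons x (Fin.tail w) : Fin (n + 2) → G) 1 = w 1 := by
            rw [cons_one]
            show w (0 : Fin (n + 1)).succ = w 1
            rw [Fin.succ_zero_eq_one]
          have hmemT : br (Fin.cons x (Fin.tail w)) ∈ T := by
            obtain ⟨c, q, hq⟩ := reorder1 br (Fin.cons x (Fin.tail w)) 1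
            rw [hq]
            refine Submodule.smul_mem _ _ (mem_bracketSpan br ?_)
            intro i
            refine Fin.cases ?_ (fun j => ?_) i
            · simp only [Fin.cons_zero]
              rw [hv1]
              exact hw1
            · simp only [Fin.cons_succ]
              exact Submodule.mem_top
          have hOmem := hTO hmemT
          have h0 := LinearMap.BilinForm.mem_orthogonal_iff.mp hOmem (w 0) hw0
          rw [hsymm (br (Fin.cons x (Fin.tail w))) (w 0), h0, neg_zero]
      | zero => intro x; simp
      | add u v hu hv ihu ihv =>
          intro x
          rw [map_add, LinearMap.add_apply, ihu x, ihv x, add_zero]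
      | smul c u hu ihu =>
          intro x
          rw [map_smul, LinearMap.smul_apply, ihu x, smul_zero]
    exact hnd.1 h (key h hh')
  rcases dich (T ⊔ O) (isIdeal_sup br hTid hOid) le_sup_right with hTOeq | hTOtop
  · exact hHT (le_sup_left.trans hTOeq.le)
  · rcases dich (R ⊔ O) (isIdeal_sup br hRid hOid) le_sup_right with hROeq | hROtop
    · have hRle : R ≤ O := le_sup_left.trans hROeq.le
      have hTle : T ≤ O := by
        apply Submodule.span_le.mpr
        rintro z ⟨w, hw, rfl⟩
        refine ideal_slot br hOid w 0 (hRle ?_)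
        have := hw 0
        rwa [Fin.cons_zero] at this
      exact hHT hTle
    · have hiter : ∀ k, (derivedStep br)^[k] R ⊔ O = ⊤ := by
        intro k
        induction k with
        | zero => simpa using hROtop
        | succ k ih =>
            have hsub : T ≤ derivedStep br ((derivedStep br)^[k] R) ⊔ O := by
              have hTd : T ≤ derivedAlg br := by
                apply Submodule.span_mono
                rintro z ⟨w, hw, rfl⟩
                exact ⟨w, fun i => Submodule.mem_top, rfl⟩
              refine hTd.trans ?_
              apply Submodule.span_le.mpr
              rintro z ⟨w, hw, rfl⟩
              have hwmem : ∀ i, w i ∈ (derivedStep br)^[k] R ⊔ O := fun i => by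
                rw [ih]; exact Submodule.mem_top
              choose aa haa bb hbb habb using fun i => Submodule.mem_sup.mp (hwmem i)
              have hweq : w = aa + bb := funext fun i => (habb i).symm
              rw [hweq]
              have hexp := br.toMultilinearMap.map_add_univ aa bb
              simp only [AlternatingMap.coe_multilinearMap] at hexp
              rw [hexp]
              refine Submodule.sum_mem _ fun s _ => ?_
              by_cases hs : s = Finset.univ
              · subst hs
                rw [Finset.piecewise_univ]
                exact Submodule.mem_sup_left (mem_bracketSpan br fun i => haa i)
              · obtain ⟨j, hj⟩ : ∃ j, j ∉ s := by
                  by_contra hc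
                  push_neg at hc
                  exact hs (Finset.eq_univ_iff_forall.mpr hc)
                refine Submodule.mem_sup_right (ideal_slot br hOid _ j ?_)
                rw [Finset.piecewise_eq_of_notMem _ _ _ hj]
                exact hbb j
            rw [Function.iterate_succ_apply']
            refine top_unique ?_
            rw [← hTOtop]
            exact sup_le (hsub.trans (sup_le le_sup_left le_sup_right)) le_sup_right
      obtain ⟨k, hk⟩ := hsolv
      have hfin := hiter k
      rw [hk, bot_sup_eq] at hfin
      exact hOne hfin

end NLieAux

end AuxNLie



variable {n : ℕ} {G : Type*} [AddCommGroup G] [Module ℂ G]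

theorem minimal_ideal_iff_irreducible_submodule_of_centralizer
    (br : AlternatingMap ℂ G G (Fin (n + 2))) (hLie : IsNLie br)
    [FiniteDimensional ℂ G]
    (B : LinearMap.BilinForm ℂ G) (hB : IsMetric br B)
    (S R : Submodule ℂ G) (hLevi : IsLeviDecomp br S R)
    (hss : ∀ I : Submodule ℂ G, IsIdeal br I → IsStrongSemisimple br I → I = ⊥)
    (H : Submodule ℂ G) (hH : IsSubalgebra br H) :
    IsMinimalIdeal br H ↔
      (H ≤ centralizer br R ∧ IsIrreducibleSModule br S H) := by

  have hRid : IsIdeal br R := hLevi.1.1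
  have hsolv : NLieSolvable br R := hLevi.1.2.1
  have hsup : S ⊔ R = ⊤ := codisjoint_iff.mp hLevi.2.2.2.codisjoint
  constructor
  · intro hmin
    have hWid : ∀ i, IsIdeal br
        ((Fin.cons H (Fin.cons R fun _ => (⊤ : Submodule ℂ G) : Fin (n + 1) → Submodule ℂ G) :
          Fin (n + 2) → Submodule ℂ G) i) := by
      intro i
      refine Fin.cases ?_ (fun j => ?_) i
      · rw [Fin.cons_zero]; exact hmin.1
      · rw [Fin.cons_succ]
        refine Fin.cases ?_ (fun k => ?_) j
        · rw [Fin.cons_zero]; exact hRid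
        · rw [Fin.cons_succ]; exact NLieAux.isIdeal_top br
    have hPid : IsIdeal br (pairBracket br H R) := NLieAux.bracketSpan_isIdeal br hLie hWid
    have hPle : pairBracket br H R ≤ H := by
      apply Submodule.span_le.mpr
      rintro z ⟨w, hw, rfl⟩
      refine NLieAux.ideal_slot br hmin.1 w 0 ?_
      have := hw 0
      rwa [Fin.cons_zero] at this
    rcases hmin.2.2 _ hPid hPle with hPbot | hPH
    · have hHC : H ≤ centralizer br R := by
        intro h hh
        rw [NLieAux.mem_centralizer_iff]
        intro v hv y
        have hmem : br (Fin.cons h (Fin.cons v y)) ∈ pairBracket br H R := by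
          refine NLieAux.mem_bracketSpan br ?_
          intro i
          refine Fin.cases ?_ (fun j => ?_) i
          · simp only [Fin.cons_zero]; exact hh
          · simp only [Fin.cons_succ]
            refine Fin.cases ?_ (fun k => ?_) j
            · simp only [Fin.cons_zero]; exact hv
            · simp only [Fin.cons_succ]; exact Submodule.mem_top
        rw [hPbot] at hmem
        simpa using hmem
      refine ⟨hHC, ?_, hmin.2.1, ?_⟩
      · exact fun y hy x hx => hmin.1 y x hx
      · intro K hKH hKmod
        exact hmin.2.2 K (NLieAux.smodule_isIdeal br S R K hsup (hKH.trans hHC) hKmod) hKH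
    · exact (NLieAux.main_contra br hLie B hB R hRid hsolv hmin hPH).elim
  · rintro ⟨hHC, hmod, hne, hirr⟩
    refine ⟨NLieAux.smodule_isIdeal br S R H hsup hHC hmod, hne, ?_⟩
    intro I hI hIH
    exact hirr I hIH (fun y hy x hx => hI y x hx)
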